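/- Let n ≥ 3 and let k > n/(n-2) be a positive integer. For F(r) = r^{2m}, ψ(s) = -sin^{2k}s, and f = F(r)ψ(s), define L = (Δf + 2nf)/(r^{2m-2} sin^{2k}s) where Δ is the Laplacian of the round metric on S^{n+1}. Then L = -2m(2m-1) - 2mn·r·cot r + 2k r²/sin²r - 2k(2k+n-2) r² cot²s / sin²r - 2n r². Moreover, if 2m-1 > π²k/2, then L < -(2m-1)² - 2k(2k+n-2) r² cot²s / sin²r < 0 for all 0 < r ≤ π/2, 0 < s < π; in particular Δf + 2nf < 0 there. -/

import Mathlib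

open Real

noncomputable def lapRS (n : ℕ) (f : ℝ → ℝ → ℝ) (r s : ℝ) : ℝ :=
  deriv (fun r' => deriv (fun r'' => f r'' s) r') r
    + (1 / Real.sin r ^ 2) * deriv (fun s' => deriv (fun s'' => f r s'') s') s
    + n * (Real.cos r / Real.sin r) * deriv (fun r' => f r' s) r
    + ((n : ℝ) - 1) * (Real.cos s / Real.sin s) / Real.sin r ^ 2 * deriv (fun s' => f r s') s

noncomputable def fmk (m k : ℕ) (r s : ℝ) : ℝ := -(r ^ (2 * m) * Real.sin s ^ (2 * k))

noncomputable def Lmk (n m k : ℕ) (r s : ℝ) : ℝ :=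
  (lapRS n (fmk m k) r s + 2 * n * fmk m k r s) / (r ^ (2 * m - 2) * Real.sin s ^ (2 * k))


open Real

lemma deriv1_r (p : ℕ) (c x : ℝ) :
    deriv (fun r => -(r ^ (p + 2) * c)) x = -((p + 2 : ℝ) * x ^ (p + 1) * c) := by
  have h : HasDerivAt (fun r : ℝ => -(r ^ (p + 2) * c)) (-(((p + 2 : ℕ) : ℝ) * x ^ (p + 1) * c)) x := by
    simpa using ((hasDerivAt_pow (p + 2) x).mul_const c).fun_neg
  simpa using h.deriv

lemma deriv2_r (p : ℕ) (c x : ℝ) :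
    deriv (fun r' => deriv (fun r'' => -(r'' ^ (p + 2) * c)) r') x
      = -((p + 2 : ℝ) * (p + 1) * x ^ p * c) := by
  have h1 : (fun r' => deriv (fun r'' => -(r'' ^ (p + 2) * c)) r')
      = fun r' => -((p + 2 : ℝ) * r' ^ (p + 1) * c) := funext fun y => deriv1_r p c y
  rw [h1]
  have h : HasDerivAt (fun r' : ℝ => -((p + 2 : ℝ) * r' ^ (p + 1) * c))
      (-((p + 2 : ℝ) * (((p + 1 : ℕ) : ℝ) * x ^ p) * c)) x := by
    simpa using (((hasDerivAt_pow (p + 1) x).const_mul ((p + 2 : ℝ))).mul_const c).fun_neg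
  rw [h.deriv]; push_cast; ring

lemma deriv1_s (q : ℕ) (a y : ℝ) :
    deriv (fun t => -(a * Real.sin t ^ (q + 4))) y
      = -(a * ((q + 4 : ℝ) * Real.sin y ^ (q + 3) * Real.cos y)) := by
  have h : HasDerivAt (fun t : ℝ => -(a * Real.sin t ^ (q + 4)))
      (-(a * (((q + 4 : ℕ) : ℝ) * Real.sin y ^ (q + 3) * Real.cos y))) y := by
    simpa using (((Real.hasDerivAt_sin y).pow (q + 4)).const_mul a).fun_neg
  simpa using h.deriv

lemma deriv2_s (q : ℕ) (a y : ℝ) :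
    deriv (fun t' => deriv (fun t'' => -(a * Real.sin t'' ^ (q + 4))) t') y
      = -(a * ((q + 4 : ℝ) * ((q + 3 : ℝ) * Real.sin y ^ (q + 2) * Real.cos y ^ 2
          - Real.sin y ^ (q + 4)))) := by
  have h1 : (fun t' => deriv (fun t'' => -(a * Real.sin t'' ^ (q + 4))) t')
      = fun t' => -((a * (q + 4 : ℝ)) * (Real.sin t' ^ (q + 3) * Real.cos t')) := by
    funext t; rw [deriv1_s q a t]; ring
  have hh : HasDerivAt (fun t' : ℝ => Real.sin t' ^ (q + 3) * Real.cos t')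
      ((((q + 3 : ℕ) : ℝ) * Real.sin y ^ (q + 2) * Real.cos y) * Real.cos y
        + Real.sin y ^ (q + 3) * (-Real.sin y)) y :=
    (((Real.hasDerivAt_sin y).pow (q + 3)).mul (Real.hasDerivAt_cos y))
  have h := (hh.const_mul (a * (q + 4 : ℝ))).fun_neg
  rw [h1, h.deriv]
  have hsc : Real.sin y ^ (q + 4) = Real.sin y ^ (q + 2) * Real.sin y ^ 2 := by ring
  push_cast
  ring


set_option maxHeartbeats 1000000 in
/-- For `n ≥ 3`, `k > n/(n-2)` a positive integer, `m ≥ 1`: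
`L = -2m(2m-1) - 2mn r cot r + 2k r²/sin²r - 2k(2k+n-2) r² cot²s/sin²r - 2n r²`
on `0 < r ≤ π/2`, `0 < s < π`; moreover if `2m - 1 > π²k/2` then
`L < -(2m-1)² - 2k(2k+n-2) r² cot²s / sin²r < 0`, and in particular `Δf + 2nf < 0`. -/
theorem stmt12 (n m k : ℕ) (hn : 3 ≤ n) (hk : ((n : ℝ) / (n - 2)) < k) (hm : 1 ≤ m)
    (r s : ℝ) (hr : 0 < r) (hr' : r ≤ π / 2) (hs : 0 < s) (hs' : s < π) :
    Lmk n m k r s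
      = -(2 * m) * (2 * m - 1) - 2 * m * n * r * (Real.cos r / Real.sin r)
        + 2 * k * r ^ 2 / Real.sin r ^ 2
        - 2 * k * (2 * k + n - 2) * r ^ 2 * (Real.cos s / Real.sin s) ^ 2 / Real.sin r ^ 2
        - 2 * n * r ^ 2 ∧
    ((π ^ 2 * k / 2 < 2 * m - 1) →
      (Lmk n m k r s
          < -(2 * (m : ℝ) - 1) ^ 2
            - 2 * k * (2 * k + n - 2) * r ^ 2 * (Real.cos s / Real.sin s) ^ 2
              / Real.sin r ^ 2 ∧
        -(2 * (m : ℝ) - 1) ^ 2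
            - 2 * k * (2 * k + n - 2) * r ^ 2 * (Real.cos s / Real.sin s) ^ 2
              / Real.sin r ^ 2 < 0 ∧
        lapRS n (fmk m k) r s + 2 * n * fmk m k r s < 0)) := by
  have hpi : (0:ℝ) < π := Real.pi_pos
  -- k ≥ 2
  have hn2 : (0:ℝ) < (n:ℝ) - 2 := by
    have : (3:ℝ) ≤ n := by exact_mod_cast hn
    linarith
  have hk1 : (1:ℝ) < (k:ℝ) := by
    have h1 : (1:ℝ) < (n:ℝ) / ((n:ℝ) - 2) := by
      rw [lt_div_iff₀ hn2]; linarith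
    linarith
  have hk1' : 1 < k := by exact_mod_cast hk1
  have hk2 : 2 ≤ k := by omega
  obtain ⟨m', rfl⟩ : ∃ m', m = m' + 1 := ⟨m - 1, by omega⟩
  obtain ⟨k', rfl⟩ : ∃ k', k = k' + 2 := ⟨k - 2, by omega⟩
  have hrπ : r < π := lt_of_le_of_lt hr' (by linarith)
  have sr : 0 < Real.sin r := Real.sin_pos_of_pos_of_lt_pi hr hrπ
  have ss : 0 < Real.sin s := Real.sin_pos_of_pos_of_lt_pi hs hs'
  have hcosr : 0 ≤ Real.cos r := Real.cos_nonneg_of_mem_Icc ⟨by linarith, hr'⟩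
  have em : 2 * (m' + 1) = 2 * m' + 2 := by ring
  have em2 : 2 * (m' + 1) - 2 = 2 * m' := by omega
  have ek : 2 * (k' + 2) = 2 * k' + 4 := by ring
  have heq : Lmk n (m' + 1) (k' + 2) r s
      = -(2 * (m' + 1 : ℕ) : ℝ) * (2 * (m' + 1 : ℕ) - 1)
        - 2 * (m' + 1 : ℕ) * n * r * (Real.cos r / Real.sin r)
        + 2 * (k' + 2 : ℕ) * r ^ 2 / Real.sin r ^ 2
        - 2 * (k' + 2 : ℕ) * (2 * (k' + 2 : ℕ) + n - 2) * r ^ 2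
            * (Real.cos s / Real.sin s) ^ 2 / Real.sin r ^ 2
        - 2 * n * r ^ 2 := by
    rw [Lmk, lapRS]
    simp only [fmk, em, em2, ek]
    rw [deriv2_r (2 * m') (Real.sin s ^ (2 * k' + 4)) r,
      deriv1_r (2 * m') (Real.sin s ^ (2 * k' + 4)) r,
      deriv2_s (2 * k') (r ^ (2 * m' + 2)) s,
      deriv1_s (2 * k') (r ^ (2 * m' + 2)) s]
    have hr0 : r ≠ 0 := hr.ne'
    have hsr0 : Real.sin r ≠ 0 := sr.ne'
    have hss0 : Real.sin s ≠ 0 := ss.ne'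
    field_simp
    push_cast
    ring
  refine ⟨heq, fun hkm => ?_⟩
  -- bound r^2/sin^2 r
  have hsin_lb : 2 / π * r ≤ Real.sin r := Real.mul_le_sin hr.le hr'
  have hrs : r ≤ π / 2 * Real.sin r := by
    have := mul_le_mul_of_nonneg_left hsin_lb (le_of_lt (by positivity : (0:ℝ) < π / 2))
    calc r = π / 2 * (2 / π * r) := by field_simp
    _ ≤ π / 2 * Real.sin r := this
  have hB : r ^ 2 / Real.sin r ^ 2 ≤ π ^ 2 / 4 := by
    rw [div_le_iff₀ (by positivity)]
    nlinarith
  have hA : 0 ≤ r * (Real.cos r / Real.sin r) := by positivity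
  have hC : 0 ≤ 2 * ((k':ℝ) + 2) * (2 * ((k':ℝ) + 2) + n - 2) * r ^ 2
      * (Real.cos s / Real.sin s) ^ 2 / Real.sin r ^ 2 := by
    have hn3 : (3:ℝ) ≤ n := by exact_mod_cast hn
    have h1 : (0:ℝ) ≤ 2 * ((k':ℝ) + 2) * (2 * ((k':ℝ) + 2) + n - 2) := by
      have hknn : (0:ℝ) ≤ (k':ℝ) := Nat.cast_nonneg _
      nlinarith
    apply div_nonneg _ (sq_nonneg _)
    exact mul_nonneg (mul_nonneg h1 (sq_nonneg r)) (sq_nonneg _)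
  have hL1 : Lmk n (m' + 1) (k' + 2) r s
      < -(2 * ((m' : ℝ) + 1) - 1) ^ 2
        - 2 * ((k' : ℕ) + 2 : ℕ) * (2 * ((k' : ℕ) + 2 : ℕ) + n - 2) * r ^ 2
            * (Real.cos s / Real.sin s) ^ 2 / Real.sin r ^ 2 := by
    rw [heq]; clear heq
    push_cast at hkm ⊢
    have hX : 2 * ((k':ℝ) + 2) * r ^ 2 / Real.sin r ^ 2
        = 2 * ((k':ℝ) + 2) * (r ^ 2 / Real.sin r ^ 2) := by ring
    have hB2 : 2 * ((k':ℝ) + 2) * r ^ 2 / Real.sin r ^ 2 < 2 * ((m':ℝ) + 1) - 1 := by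
      rw [hX]
      calc 2 * ((k':ℝ) + 2) * (r ^ 2 / Real.sin r ^ 2) ≤ 2 * ((k':ℝ) + 2) * (π ^ 2 / 4) := by
            apply mul_le_mul_of_nonneg_left hB (by positivity)
      _ = π ^ 2 * ((k':ℝ) + 2) / 2 := by ring
      _ < 2 * ((m':ℝ) + 1) - 1 := hkm
    have hmn : 0 ≤ 2 * ((m':ℝ) + 1) * n * (r * (Real.cos r / Real.sin r)) := by
      apply mul_nonneg _ hA; positivity
    have hnr : 0 ≤ 2 * (n:ℝ) * r ^ 2 := by positivity
    have hid : -(2 * ((m':ℝ) + 1)) * (2 * ((m':ℝ) + 1) - 1)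
        = -(2 * ((m':ℝ) + 1) - 1) ^ 2 - (2 * ((m':ℝ) + 1) - 1) := by ring
    linarith [hB2, hmn, hnr, hid]
  have hL2 : -(2 * ((m' : ℝ) + 1) - 1) ^ 2
        - 2 * ((k' : ℕ) + 2 : ℕ) * (2 * ((k' : ℕ) + 2 : ℕ) + n - 2) * r ^ 2
            * (Real.cos s / Real.sin s) ^ 2 / Real.sin r ^ 2 < 0 := by
    clear heq
    push_cast
    have hm1 : (0:ℝ) ≤ (m':ℝ) := Nat.cast_nonneg _
    have h21 : (1:ℝ) ≤ 2 * ((m':ℝ) + 1) - 1 := by linarith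
    have hsq : (1:ℝ) ≤ (2 * ((m':ℝ) + 1) - 1) ^ 2 := by
      calc (1:ℝ) = 1 * 1 := by norm_num
      _ ≤ (2 * ((m':ℝ) + 1) - 1) * (2 * ((m':ℝ) + 1) - 1) :=
          mul_le_mul h21 h21 (by norm_num) (by linarith)
      _ = (2 * ((m':ℝ) + 1) - 1) ^ 2 := by ring
    linarith [hC, hsq]
  refine ⟨by exact_mod_cast hL1, by exact_mod_cast hL2, ?_⟩
  have hL : Lmk n (m' + 1) (k' + 2) r s < 0 := by
    calc Lmk n (m' + 1) (k' + 2) r s < _ := hL1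
    _ < 0 := hL2
  have hden : 0 < r ^ (2 * (m' + 1) - 2) * Real.sin s ^ (2 * (k' + 2)) := by positivity
  have hnum : lapRS n (fmk (m' + 1) (k' + 2)) r s + 2 * n * fmk (m' + 1) (k' + 2) r s
      = Lmk n (m' + 1) (k' + 2) r s * (r ^ (2 * (m' + 1) - 2) * Real.sin s ^ (2 * (k' + 2))) := by
    rw [Lmk, div_mul_cancel₀ _ hden.ne']
  rw [hnum]
  exact mul_neg_of_neg_of_pos hL hden
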